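/- Let n ≥ 2, x : ℤ → ℝ, and let t′ satisfy t* < t′ < t* + n − 1. Let ε > 0 and suppose x_{t′} = x_{t*} − ε (the log return from t* to t′ is −ε). If x_t > x_{t*} − ε for every t with t′ − n + 1 ≤ t < t*, and x_t ≥ x_{t*} − ε for every t with t* ≤ t ≤ t′, then mave_{t′} > x_{t*} − ε. -/

import Mathlib

/-- The `n`-period moving average of a sequence `x : ℤ → ℝ` at time `t`:
`mave n x t = (1/n) · ∑_{i=0}^{n−1} x (t − i)`. -/
noncomputable def mave (n : ℕ) (x : ℤ → ℝ) (t : ℤ) : ℝ :=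
  (∑ i ∈ Finset.range n, x (t - (i : ℤ))) / n

/-- Lemma 4: the lower bound of Lemma 3 extended to an intermediate time
`t* < t′ < t* + n − 1`.  If the log return from `t*` to `t′` is `−ε` (`ε > 0`),
the pre-entry values lying inside the window ending at `t′` satisfy
`x t > x t* − ε`, and the values on `[t*, t′]` satisfy `x t ≥ x t* − ε`,
then `mave t′ > x t* − ε`. -/
theorem mave_lower_bound_intermediate
    (n : ℕ) (hn : 2 ≤ n) (x : ℤ → ℝ) (tstar t' : ℤ)
    (h1 : tstar < t') (h2 : t' < tstar + (n : ℤ) - 1)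
    (ε : ℝ) (hε : 0 < ε)
    (hret : x t' = x tstar - ε)
    (hpre : ∀ t : ℤ, t' - (n : ℤ) + 1 ≤ t → t < tstar → x tstar - ε < x t)
    (hpost : ∀ t : ℤ, tstar ≤ t → t ≤ t' → x tstar - ε ≤ x t) :
    x tstar - ε < mave n x t' := by
  have hall : ∀ i ∈ Finset.range n, x tstar - ε ≤ x (t' - (i : ℤ)) := by
    intro i hi
    simp only [Finset.mem_range] at hi
    rcases lt_or_ge (t' - (i : ℤ)) tstar with h | h
    · exact le_of_lt (hpre _ (by omega) h)
    · exact hpost _ h (by omega)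
  have hstrict : ∃ i ∈ Finset.range n, x tstar - ε < x (t' - (i : ℤ)) := by
    refine ⟨n - 1, Finset.mem_range.mpr (by omega), hpre _ (by omega) (by omega)⟩
  have hsum : (n : ℝ) * (x tstar - ε) < ∑ i ∈ Finset.range n, x (t' - (i : ℤ)) := by
    calc (n : ℝ) * (x tstar - ε) = ∑ _i ∈ Finset.range n, (x tstar - ε) := by
          simp [mul_comm]
          ring
      _ < _ := Finset.sum_lt_sum hall hstrict
  rw [mave, lt_div_iff₀ (by positivity)]
  linarith
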